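/- arXiv:2008.02227 — 2 statements merged into one kernel-verified Lean document; each statement's English description precedes it below -/
import Mathlib

section
/- Suppose φ₁, φ₂, φ₃ : ℝ → [0,∞) are one-dimensional Young functions such that φᵢ is incomparable with φⱼ + φₖ for every permutation (i,j,k) of (1,2,3). Then the Young function Φ(x,y) = φ₁(x) + φ₂(y) + φ₃(x-y) is essentially fully anisotropic: there is no invertible linear map T : ℝ² → ℝ² and one-dimensional Young functions ψ₁, ψ₂ with Φ(T(x,y)) ≃ ψ₁(|x|) + ψ₂(|y|). -/
/-- `F` dominates `G`: there are constants `c, d > 0` with `c * G (d • x) ≤ F x` for all `x`. -/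
def Dominates {V : Type*} [SMul ℝ V] (F G : V → ℝ) : Prop :=
  ∃ c d : ℝ, 0 < c ∧ 0 < d ∧ ∀ x, c * G (d • x) ≤ F x

/-- `F ≃ G`: mutual domination. -/
def FEquiv {V : Type*} [SMul ℝ V] (F G : V → ℝ) : Prop :=
  Dominates F G ∧ Dominates G F

/-- `F` and `G` are incomparable: neither dominates the other. -/
def Incomparable {V : Type*} [SMul ℝ V] (F G : V → ℝ) : Prop :=
  ¬ Dominates F G ∧ ¬ Dominates G F

/-- A one-dimensional Young function: even, convex, nonnegative, vanishing at `0`. -/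
def IsYoung1D (φ : ℝ → ℝ) : Prop :=
  (∀ t, φ (-t) = φ t) ∧ ConvexOn ℝ Set.univ φ ∧ φ 0 = 0 ∧ ∀ t, 0 ≤ φ t

namespace Aniso

lemma young_abs {φ : ℝ → ℝ} (h : IsYoung1D φ) (x : ℝ) : φ |x| = φ x := by
  rcases abs_cases x with ⟨e, _⟩ | ⟨e, _⟩
  · rw [e]
  · rw [e, h.1]

lemma young_eq_of_abs {φ : ℝ → ℝ} (h : IsYoung1D φ) {x y : ℝ} (hxy : |x| = |y|) :
    φ x = φ y := by rw [← young_abs h x, hxy, young_abs h y]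

lemma young_mono {φ : ℝ → ℝ} (h : IsYoung1D φ) {l : ℝ} (h0 : 0 ≤ l) (h1 : l ≤ 1)
    (s : ℝ) : φ (l * s) ≤ φ s := by
  have hc := h.2.1.2 (Set.mem_univ s) (Set.mem_univ (0 : ℝ)) h0
    (by linarith : (0:ℝ) ≤ 1 - l) (by ring)
  simp only [smul_eq_mul, mul_zero, add_zero, h.2.2.1] at hc
  nlinarith [h.2.2.2 s, hc]

def Shape (g : ℝ → ℝ) : Prop :=
  (∀ t, 0 ≤ g t) ∧ ∀ l t, 0 ≤ l → l ≤ 1 → g (l * t) ≤ g t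

lemma young_shape' {φ : ℝ → ℝ} (h : IsYoung1D φ) (a : ℝ) :
    Shape (fun t => φ (t * a)) := by
  refine ⟨fun t => h.2.2.2 _, fun l t h0 h1 => ?_⟩
  have e : l * t * a = l * (t * a) := by ring
  simp only [e]
  exact young_mono h h0 h1 _

lemma shape_add {g1 g2 : ℝ → ℝ} (h1 : Shape g1) (h2 : Shape g2) :
    Shape (fun t => g1 t + g2 t) :=
  ⟨fun t => add_nonneg (h1.1 t) (h2.1 t),
   fun l t a b => add_le_add (h1.2 l t a b) (h2.2 l t a b)⟩

lemma dom_trans {V : Type*} [MulAction ℝ V] {F G H : V → ℝ}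
    (h1 : Dominates F G) (h2 : Dominates G H) : Dominates F H := by
  obtain ⟨c1, d1, hc1, hd1, H1⟩ := h1
  obtain ⟨c2, d2, hc2, hd2, H2⟩ := h2
  refine ⟨c1 * c2, d2 * d1, mul_pos hc1 hc2, mul_pos hd2 hd1, fun x => ?_⟩
  have h2x := H2 (d1 • x)
  have h1x := H1 x
  calc c1 * c2 * H ((d2 * d1) • x) = c1 * (c2 * H (d2 • d1 • x)) := by
        rw [← smul_smul]; ring
    _ ≤ c1 * G (d1 • x) := mul_le_mul_of_nonneg_left h2x hc1.le
    _ ≤ F x := h1x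

lemma dom_restrict {F G : ℝ × ℝ → ℝ} (h : Dominates F G) (v : ℝ × ℝ) :
    Dominates (fun t : ℝ => F (t • v)) (fun t : ℝ => G (t • v)) := by
  obtain ⟨c, d, hc, hd, H⟩ := h
  refine ⟨c, d, hc, hd, fun t => ?_⟩
  have := H (t • v)
  rwa [smul_smul, ← smul_eq_mul] at this

lemma dom_scale' {φ : ℝ → ℝ} (h : IsYoung1D φ) {a b : ℝ} (ha : a ≠ 0) (hb : b ≠ 0) :
    Dominates (fun t => φ (t * a)) (fun t => φ (t * b)) := by
  refine ⟨1, |a| / |b|, one_pos, div_pos (abs_pos.2 ha) (abs_pos.2 hb), fun t => ?_⟩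
  have hb' : |b| ≠ 0 := abs_ne_zero.2 hb
  have e : φ ((|a| / |b| * t) * b) = φ (t * a) := by
    apply young_eq_of_abs h
    rw [abs_mul, abs_mul, abs_mul, abs_div, abs_abs, abs_abs]
    field_simp
  show 1 * φ ((|a| / |b|) • t * b) ≤ φ (t * a)
  rw [smul_eq_mul, one_mul, e]

lemma dom_add {f1 f2 g1 g2 : ℝ → ℝ} (h1 : Dominates f1 g1) (h2 : Dominates f2 g2)
    (s1 : Shape g1) (s2 : Shape g2) :
    Dominates (fun t => f1 t + f2 t) (fun t => g1 t + g2 t) := by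
  obtain ⟨c1, d1, hc1, hd1, H1⟩ := h1
  obtain ⟨c2, d2, hc2, hd2, H2⟩ := h2
  refine ⟨min c1 c2, min d1 d2, lt_min hc1 hc2, lt_min hd1 hd2, fun t => ?_⟩
  have key : ∀ (c d : ℝ) (g f : ℝ → ℝ), 0 < c → 0 < d → Shape g →
      (∀ x : ℝ, c * g (d • x) ≤ f x) → min c1 c2 ≤ c → min d1 d2 ≤ d →
      min c1 c2 * g (min d1 d2 * t) ≤ f t := by
    intro c d g f hc hd sg Hf hcle hdle
    have hd0 : 0 < min d1 d2 := lt_min hd1 hd2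
    have e : min d1 d2 * t = (min d1 d2 / d) * (d * t) := by field_simp
    have m : g (min d1 d2 * t) ≤ g (d * t) := by
      rw [e]
      exact sg.2 _ _ (by positivity) (by rw [div_le_one hd]; exact hdle)
    calc min c1 c2 * g (min d1 d2 * t) ≤ c * g (d * t) :=
          mul_le_mul hcle m (sg.1 _) hc.le
      _ ≤ f t := by have := Hf t; rwa [smul_eq_mul] at this
  have A := key c1 d1 g1 f1 hc1 hd1 s1 H1 (min_le_left _ _) (min_le_left _ _)
  have B := key c2 d2 g2 f2 hc2 hd2 s2 H2 (min_le_right _ _) (min_le_right _ _)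
  show min c1 c2 * (g1 (min d1 d2 * t) + g2 (min d1 d2 * t)) ≤ f1 t + f2 t
  rw [mul_add]
  exact add_le_add A B

lemma root_finite {a b : ℝ} (h : a ≠ 0 ∨ b ≠ 0) : {s : ℝ | a + s * b = 0}.Finite := by
  rcases eq_or_ne b 0 with hb | hb
  · rcases h with ha | hb'
    · convert Set.finite_empty
      ext s
      simp [hb, ha]
    · exact absurd hb hb'
  · apply Set.Finite.subset (Set.finite_singleton (-a / b))
    intro s hs
    simp only [Set.mem_setOf_eq] at hs
    simp only [Set.mem_singleton_iff]
    field_simp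
    linarith

lemma ax_fst (T : (ℝ × ℝ) →ₗ[ℝ] (ℝ × ℝ)) {u u' v v' : ℝ × ℝ}
    (hu : T u = v) (hu' : T u' = v') (h : u.1 = 0) (h' : u'.1 = 0)
    (hv' : v' ≠ 0) (hdet : v.1 * v'.2 ≠ v.2 * v'.1) : False := by
  have key : u'.2 • v = u.2 • v' := by
    rw [← hu, ← hu', ← map_smul, ← map_smul]
    congr 1
    apply Prod.ext
    · simp [h, h']
    · simp [mul_comm]
  have h2' : u'.2 ≠ 0 := by
    intro hz
    apply hv'
    rw [← hu']
    have : u' = 0 := by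
      apply Prod.ext <;> simp [h', hz]
    rw [this, map_zero]
  have e1 : u'.2 * v.1 = u.2 * v'.1 := by
    have := congrArg Prod.fst key
    simpa using this
  have e2 : u'.2 * v.2 = u.2 * v'.2 := by
    have := congrArg Prod.snd key
    simpa using this
  apply hdet
  apply mul_left_cancel₀ h2'
  calc u'.2 * (v.1 * v'.2) = (u'.2 * v.1) * v'.2 := by ring
    _ = (u.2 * v'.1) * v'.2 := by rw [e1]
    _ = (u.2 * v'.2) * v'.1 := by ring
    _ = (u'.2 * v.2) * v'.1 := by rw [e2]
    _ = u'.2 * (v.2 * v'.1) := by ring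

lemma ax_snd (T : (ℝ × ℝ) →ₗ[ℝ] (ℝ × ℝ)) {u u' v v' : ℝ × ℝ}
    (hu : T u = v) (hu' : T u' = v') (h : u.2 = 0) (h' : u'.2 = 0)
    (hv' : v' ≠ 0) (hdet : v.1 * v'.2 ≠ v.2 * v'.1) : False := by
  have key : u'.1 • v = u.1 • v' := by
    rw [← hu, ← hu', ← map_smul, ← map_smul]
    congr 1
    apply Prod.ext
    · simp [mul_comm]
    · simp [h, h']
  have h1' : u'.1 ≠ 0 := by
    intro hz
    apply hv'
    rw [← hu']
    have : u' = 0 := by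
      apply Prod.ext <;> simp [h', hz]
    rw [this, map_zero]
  have e1 : u'.1 * v.1 = u.1 * v'.1 := by
    have := congrArg Prod.fst key
    simpa using this
  have e2 : u'.1 * v.2 = u.1 * v'.2 := by
    have := congrArg Prod.snd key
    simpa using this
  apply hdet
  apply mul_left_cancel₀ h1'
  calc u'.1 * (v.1 * v'.2) = (u'.1 * v.1) * v'.2 := by ring
    _ = (u.1 * v'.1) * v'.2 := by rw [e1]
    _ = (u.1 * v'.2) * v'.1 := by ring
    _ = (u'.1 * v.2) * v'.1 := by rw [e2]
    _ = u'.1 * (v.2 * v'.1) := by ring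

end Aniso

open Aniso

theorem essentially_fully_anisotropic (φ : Fin 3 → ℝ → ℝ)
    (hY : ∀ i, IsYoung1D (φ i))
    (hinc : ∀ i j k : Fin 3, i ≠ j → j ≠ k → i ≠ k →
      Incomparable (φ i) (fun t => φ j t + φ k t)) :
    ¬ ∃ T : (ℝ × ℝ) →ₗ[ℝ] (ℝ × ℝ), Function.Bijective T ∧
      ∃ ψ₁ ψ₂ : ℝ → ℝ, IsYoung1D ψ₁ ∧ IsYoung1D ψ₂ ∧
        FEquiv (fun z : ℝ × ℝ => φ 0 (T z).1 + φ 1 (T z).2 + φ 2 ((T z).1 - (T z).2))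
               (fun z : ℝ × ℝ => ψ₁ |z.1| + ψ₂ |z.2|) := by
  rintro ⟨T, hTbij, ψ₁, ψ₂, hψ₁, hψ₂, hEq⟩
  -- decompose T on the standard basis
  have hTz : ∀ z : ℝ × ℝ, T z = z.1 • T (1, 0) + z.2 • T (0, 1) := by
    intro z
    conv_lhs => rw [show z = z.1 • ((1:ℝ), (0:ℝ)) + z.2 • ((0:ℝ), (1:ℝ)) by
      apply Prod.ext <;> simp]
    rw [map_add, map_smul, map_smul]
  -- the three coordinate functionals of interest are nonzero
  have hP : (T (1,0)).1 ≠ 0 ∨ (T (0,1)).1 ≠ 0 := by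
    by_contra hc
    push_neg at hc
    obtain ⟨z, hz⟩ := hTbij.2 (1, 0)
    have h1 : (T z).1 = 1 := by rw [hz]
    rw [hTz z] at h1
    simp [hc.1, hc.2] at h1
  have hQ : (T (1,0)).2 ≠ 0 ∨ (T (0,1)).2 ≠ 0 := by
    by_contra hc
    push_neg at hc
    obtain ⟨z, hz⟩ := hTbij.2 (0, 1)
    have h1 : (T z).2 = 1 := by rw [hz]
    rw [hTz z] at h1
    simp [hc.1, hc.2] at h1
  have hR : (T (1,0)).1 - (T (1,0)).2 ≠ 0 ∨ (T (0,1)).1 - (T (0,1)).2 ≠ 0 := by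
    by_contra hc
    push_neg at hc
    obtain ⟨z, hz⟩ := hTbij.2 (1, 0)
    have h1 : (T z).1 - (T z).2 = 1 := by rw [hz]; norm_num
    rw [hTz z] at h1
    simp only [Prod.fst_add, Prod.snd_add, Prod.smul_fst, Prod.smul_snd, smul_eq_mul] at h1
    have e1 : z.1 * ((T (1,0)).1 - (T (1,0)).2) = 0 := by rw [hc.1]; ring
    have e2 : z.2 * ((T (0,1)).1 - (T (0,1)).2) = 0 := by rw [hc.2]; ring
    nlinarith [e1, e2, h1]
  -- choose a generic slope s
  have fin : (({0} : Set ℝ) ∪ {s | (T (1,0)).1 + s * (T (0,1)).1 = 0}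
      ∪ {s | (T (1,0)).2 + s * (T (0,1)).2 = 0}
      ∪ {s | ((T (1,0)).1 - (T (1,0)).2) + s * ((T (0,1)).1 - (T (0,1)).2) = 0}).Finite :=
    ((((Set.finite_singleton 0).union (root_finite hP)).union (root_finite hQ)).union
      (root_finite hR))
  obtain ⟨s, hs⟩ := fin.infinite_compl.nonempty
  simp only [Set.mem_compl_iff, Set.mem_union, Set.mem_singleton_iff,
    Set.mem_setOf_eq, not_or] at hs
  obtain ⟨⟨⟨hs0, hsP⟩, hsQ⟩, hsR⟩ := hs
  -- the generic direction w = (1, s)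
  have hTw : T ((1:ℝ), s) = (1:ℝ) • T (1, 0) + s • T (0, 1) := by
    have := hTz ((1:ℝ), s)
    simpa using this
  have hp : (T ((1:ℝ), s)).1 ≠ 0 := by
    rw [hTw]
    simp only [Prod.fst_add, Prod.smul_fst, smul_eq_mul, one_mul]
    exact hsP
  have hq : (T ((1:ℝ), s)).2 ≠ 0 := by
    rw [hTw]
    simp only [Prod.snd_add, Prod.smul_snd, smul_eq_mul, one_mul]
    exact hsQ
  have hr : (T ((1:ℝ), s)).1 - (T ((1:ℝ), s)).2 ≠ 0 := by
    rw [hTw]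
    simp only [Prod.fst_add, Prod.snd_add, Prod.smul_fst, Prod.smul_snd, smul_eq_mul, one_mul]
    intro hcon
    apply hsR
    linarith [hcon]
  -- the equivalence restricted to the generic line
  have D3 : Dominates (fun t : ℝ => ψ₁ (t * 1) + ψ₂ (t * s))
      (fun t : ℝ => φ 0 (t * (T ((1:ℝ), s)).1) + φ 1 (t * (T ((1:ℝ), s)).2)
        + φ 2 (t * ((T ((1:ℝ), s)).1 - (T ((1:ℝ), s)).2))) := by
    have h := dom_restrict hEq.2 ((1:ℝ), s)
    simp only [map_smul, Prod.smul_fst, Prod.smul_snd, smul_eq_mul,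
      young_abs hψ₁, young_abs hψ₂, ← mul_sub] at h
    exact h
  -- the master step: a degenerate line with both coordinates nonzero yields a contradiction
  have run : ∀ (u : ℝ × ℝ) (i j k : Fin 3), i ≠ j → j ≠ k → i ≠ k → u.1 ≠ 0 → u.2 ≠ 0 →
      Dominates (fun t => φ j t + φ k t) (fun t : ℝ => ψ₁ (t * u.1) + ψ₂ (t * u.2)) →
      False := by
    intro u i j k hij hjk hik h1 h2 D1
    have D2 : Dominates (fun t : ℝ => ψ₁ (t * u.1) + ψ₂ (t * u.2))
        (fun t : ℝ => ψ₁ (t * 1) + ψ₂ (t * s)) :=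
      dom_add (dom_scale' hψ₁ h1 one_ne_zero) (dom_scale' hψ₂ h2 hs0)
        (young_shape' hψ₁ 1) (young_shape' hψ₂ s)
    have D4 : Dominates (fun t : ℝ => φ 0 (t * (T ((1:ℝ), s)).1) + φ 1 (t * (T ((1:ℝ), s)).2)
          + φ 2 (t * ((T ((1:ℝ), s)).1 - (T ((1:ℝ), s)).2)))
        (fun t : ℝ => φ 0 (t * 1) + φ 1 (t * 1) + φ 2 (t * 1)) :=
      dom_add (dom_add (dom_scale' (hY 0) hp one_ne_zero) (dom_scale' (hY 1) hq one_ne_zero)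
          (young_shape' (hY 0) 1) (young_shape' (hY 1) 1))
        (dom_scale' (hY 2) hr one_ne_zero)
        (shape_add (young_shape' (hY 0) 1) (young_shape' (hY 1) 1))
        (young_shape' (hY 2) 1)
    have e : (fun t : ℝ => φ 0 (t * 1) + φ 1 (t * 1) + φ 2 (t * 1))
        = fun t : ℝ => φ 0 t + φ 1 t + φ 2 t := by
      funext t
      rw [mul_one]
    rw [e] at D4
    have D5 : Dominates (fun t : ℝ => φ 0 t + φ 1 t + φ 2 t) (φ i) := by
      refine ⟨1, 1, one_pos, one_pos, fun t => ?_⟩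
      have n0 := (hY 0).2.2.2 t
      have n1 := (hY 1).2.2.2 t
      have n2 := (hY 2).2.2.2 t
      show 1 * φ i ((1:ℝ) • t) ≤ φ 0 t + φ 1 t + φ 2 t
      rw [one_mul, one_smul]
      have hlt := i.isLt
      rcases (by omega : (i : ℕ) = 0 ∨ (i : ℕ) = 1 ∨ (i : ℕ) = 2) with hv | hv | hv
      · rw [show i = 0 from Fin.ext hv]; linarith
      · rw [show i = 1 from Fin.ext hv]; linarith
      · rw [show i = 2 from Fin.ext hv]; linarith
    exact (hinc i j k hij hjk hik).2
      (dom_trans D1 (dom_trans D2 (dom_trans D3 (dom_trans D4 D5))))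
  -- preimages of the three degenerate lines
  obtain ⟨u₁, hu₁⟩ := hTbij.2 (0, 1)
  obtain ⟨u₂, hu₂⟩ := hTbij.2 (1, 0)
  obtain ⟨u₃, hu₃⟩ := hTbij.2 (1, 1)
  by_cases c1 : u₁.1 ≠ 0 ∧ u₁.2 ≠ 0
  · apply run u₁ 0 1 2 (by decide) (by decide) (by decide) c1.1 c1.2
    have h := dom_restrict hEq.1 u₁
    simp only [map_smul, hu₁, Prod.smul_fst, Prod.smul_snd, smul_eq_mul, mul_zero, mul_one,
      (hY 0).2.2.1, (hY 1).2.2.1, (hY 2).2.2.1, zero_sub, sub_zero, sub_self, zero_add,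
      add_zero, (hY 2).1, young_abs hψ₁, young_abs hψ₂] at h
    exact h
  · by_cases c2 : u₂.1 ≠ 0 ∧ u₂.2 ≠ 0
    · apply run u₂ 1 0 2 (by decide) (by decide) (by decide) c2.1 c2.2
      have h := dom_restrict hEq.1 u₂
      simp only [map_smul, hu₂, Prod.smul_fst, Prod.smul_snd, smul_eq_mul, mul_zero, mul_one,
        (hY 0).2.2.1, (hY 1).2.2.1, (hY 2).2.2.1, zero_sub, sub_zero, sub_self, zero_add,
        add_zero, (hY 2).1, young_abs hψ₁, young_abs hψ₂] at h
      exact h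
    · by_cases c3 : u₃.1 ≠ 0 ∧ u₃.2 ≠ 0
      · apply run u₃ 2 0 1 (by decide) (by decide) (by decide) c3.1 c3.2
        have h := dom_restrict hEq.1 u₃
        simp only [map_smul, hu₃, Prod.smul_fst, Prod.smul_snd, smul_eq_mul, mul_zero, mul_one,
          (hY 0).2.2.1, (hY 1).2.2.1, (hY 2).2.2.1, zero_sub, sub_zero, sub_self, zero_add,
          add_zero, (hY 2).1, young_abs hψ₁, young_abs hψ₂] at h
        exact h
      · -- all three preimages lie on the axes: impossible
        have d1 : u₁.1 = 0 ∨ u₁.2 = 0 := by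
          rcases not_and_or.mp c1 with h | h
          exacts [Or.inl (not_not.mp h), Or.inr (not_not.mp h)]
        have d2 : u₂.1 = 0 ∨ u₂.2 = 0 := by
          rcases not_and_or.mp c2 with h | h
          exacts [Or.inl (not_not.mp h), Or.inr (not_not.mp h)]
        have d3 : u₃.1 = 0 ∨ u₃.2 = 0 := by
          rcases not_and_or.mp c3 with h | h
          exacts [Or.inl (not_not.mp h), Or.inr (not_not.mp h)]
        rcases d1 with h1 | h1 <;> rcases d2 with h2 | h2 <;> rcases d3 with h3 | h3
        · exact ax_fst T hu₁ hu₂ h1 h2 (by simp [Prod.ext_iff]) (by norm_num)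
        · exact ax_fst T hu₁ hu₂ h1 h2 (by simp [Prod.ext_iff]) (by norm_num)
        · exact ax_fst T hu₁ hu₃ h1 h3 (by simp [Prod.ext_iff]) (by norm_num)
        · exact ax_snd T hu₂ hu₃ h2 h3 (by simp [Prod.ext_iff]) (by norm_num)
        · exact ax_fst T hu₂ hu₃ h2 h3 (by simp [Prod.ext_iff]) (by norm_num)
        · exact ax_snd T hu₁ hu₃ h1 h3 (by simp [Prod.ext_iff]) (by norm_num)
        · exact ax_snd T hu₁ hu₂ h1 h2 (by simp [Prod.ext_iff]) (by norm_num)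
        · exact ax_snd T hu₁ hu₂ h1 h2 (by simp [Prod.ext_iff]) (by norm_num)
end

section
/- For any exponents p, q, r > 0 with p ≤ q ≤ r, the function Φ(x,y) = |x|^p + |x-y|^q + |y|^r on ℝ² is equivalent to (x,y) ↦ |x|^p + |y|^r + |x|^q + |y|^q, in the sense that there exist constants c₁, c₂, d₁, d₂ > 0 such that c₁Φ(d₁x, d₁y) ≤ |x|^p + |y|^r + |x|^q + |y|^q ≤ c₂Φ(d₂x, d₂y) for all (x,y). -/
open Real

lemma aux_add_rpow (q : ℝ) (hq : 0 ≤ q) (a b : ℝ) (ha : 0 ≤ a) (hb : 0 ≤ b) :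
    (a + b) ^ q ≤ 2 ^ q * (a ^ q + b ^ q) := by
  have hm : a + b ≤ 2 * max a b := by
    rcases le_total a b with h | h
    · rw [max_eq_right h]; linarith
    · rw [max_eq_left h]; linarith
  have h0 : (0:ℝ) ≤ max a b := le_trans ha (le_max_left a b)
  calc (a + b) ^ q ≤ (2 * max a b) ^ q := Real.rpow_le_rpow (by linarith) hm hq
    _ = 2 ^ q * (max a b) ^ q := Real.mul_rpow (by norm_num) h0
    _ ≤ 2 ^ q * (a ^ q + b ^ q) := by
        apply mul_le_mul_of_nonneg_left _ (by positivity)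
        rcases le_total a b with h | h
        · rw [max_eq_right h]
          have := Real.rpow_nonneg ha q; linarith
        · rw [max_eq_left h]
          have := Real.rpow_nonneg hb q; linarith

lemma aux_mid (p q r : ℝ) (hp : 0 < p) (hq : 0 < q) (hr : 0 < r)
    (hpq : p ≤ q) (hqr : q ≤ r) (t : ℝ) (ht : 0 ≤ t) :
    t ^ q ≤ t ^ p + t ^ r := by
  rcases eq_or_lt_of_le ht with h0 | h0
  · rw [← h0, Real.zero_rpow hq.ne', Real.zero_rpow hp.ne', Real.zero_rpow hr.ne']
    norm_num
  rcases le_total t 1 with h1 | h1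
  · have := Real.rpow_le_rpow_of_exponent_ge h0 h1 hpq
    have := Real.rpow_nonneg ht r
    linarith
  · have := Real.rpow_le_rpow_of_exponent_le h1 hqr
    have := Real.rpow_nonneg ht p
    linarith

theorem power_sum_equiv (p q r : ℝ) (hp : 0 < p) (hq : 0 < q) (hr : 0 < r)
    (hpq : p ≤ q) (hqr : q ≤ r) :
    ∃ c₁ c₂ d₁ d₂ : ℝ, 0 < c₁ ∧ 0 < c₂ ∧ 0 < d₁ ∧ 0 < d₂ ∧
      ∀ x y : ℝ,
        c₁ * (|d₁ * x| ^ p + |d₁ * x - d₁ * y| ^ q + |d₁ * y| ^ r) ≤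
            |x| ^ p + |y| ^ r + |x| ^ q + |y| ^ q ∧
        |x| ^ p + |y| ^ r + |x| ^ q + |y| ^ q ≤
            c₂ * (|d₂ * x| ^ p + |d₂ * x - d₂ * y| ^ q + |d₂ * y| ^ r) := by
  have h2q : (0:ℝ) < 2 ^ q := Real.rpow_pos_of_pos (by norm_num) q
  have h3p : (0:ℝ) < 3 ^ p := Real.rpow_pos_of_pos (by norm_num) p
  have h3r : (0:ℝ) < 3 ^ r := Real.rpow_pos_of_pos (by norm_num) r
  have h2q1 : (1:ℝ) ≤ 2 ^ q := by
    have := Real.rpow_le_rpow_of_exponent_le (x := 2) (by norm_num) hq.le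
    rwa [Real.rpow_zero] at this
  refine ⟨(2 ^ q)⁻¹, 2 * 2 ^ q + 3 ^ p + 3 ^ r + 1, 1, 1,
    by positivity, by positivity, one_pos, one_pos, fun x y => ?_⟩
  simp only [one_mul]
  set A := |x| with hA
  set B := |y| with hB
  set C := |x - y| with hC
  have hA0 : 0 ≤ A := abs_nonneg x
  have hB0 : 0 ≤ B := abs_nonneg y
  have hC0 : 0 ≤ C := abs_nonneg _
  have hCAB : C ≤ A + B := abs_sub x y
  have hAp : 0 ≤ A ^ p := Real.rpow_nonneg hA0 p
  have hBr : 0 ≤ B ^ r := Real.rpow_nonneg hB0 r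
  have hAq : 0 ≤ A ^ q := Real.rpow_nonneg hA0 q
  have hBq : 0 ≤ B ^ q := Real.rpow_nonneg hB0 q
  have hCq : 0 ≤ C ^ q := Real.rpow_nonneg hC0 q
  constructor
  · -- lower bound
    rw [inv_mul_le_iff₀ h2q]
    have h1 : C ^ q ≤ 2 ^ q * (A ^ q + B ^ q) := by
      calc C ^ q ≤ (A + B) ^ q := Real.rpow_le_rpow hC0 hCAB hq.le
        _ ≤ 2 ^ q * (A ^ q + B ^ q) := aux_add_rpow q hq.le A B hA0 hB0
    nlinarith [mul_nonneg hAp (by linarith : (0:ℝ) ≤ 2 ^ q - 1),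
      mul_nonneg hBr (by linarith : (0:ℝ) ≤ 2 ^ q - 1)]
  · -- upper bound
    have key : A ^ q + B ^ q ≤ (2 * 2 ^ q + 3 ^ p + 3 ^ r) * (A ^ p + C ^ q + B ^ r) := by
      by_cases hcase : A ≤ 3 * B ∧ B ≤ 3 * A
      · obtain ⟨h1, h2⟩ := hcase
        have hAr : A ^ r ≤ 3 ^ r * B ^ r := by
          calc A ^ r ≤ (3 * B) ^ r := Real.rpow_le_rpow hA0 h1 hr.le
            _ = 3 ^ r * B ^ r := Real.mul_rpow (by norm_num) hB0
        have hBp : B ^ q ≤ B ^ p + B ^ r := aux_mid p q r hp hq hr hpq hqr B hB0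
        have hBp' : B ^ p ≤ 3 ^ p * A ^ p := by
          calc B ^ p ≤ (3 * A) ^ p := Real.rpow_le_rpow hB0 h2 hp.le
            _ = 3 ^ p * A ^ p := Real.mul_rpow (by norm_num) hA0
        have hAmid : A ^ q ≤ A ^ p + A ^ r := aux_mid p q r hp hq hr hpq hqr A hA0
        nlinarith [mul_nonneg hAp h2q.le, mul_nonneg hBr h2q.le,
          mul_nonneg hCq (by positivity : (0:ℝ) ≤ 2 * 2 ^ q + 3 ^ p + 3 ^ r),
          mul_nonneg hAp h3r.le, mul_nonneg hBr h3p.le]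
      · -- one variable dominates
        push_neg at hcase
        have hdom : A ≤ 2 * C ∧ B ≤ 2 * C := by
          rcases le_or_gt A (3 * B) with h1 | h1
          · have h2 := hcase h1
            -- B > 3A, so C ≥ B - A ≥ (2/3) B
            have hCge : B - A ≤ C := by
              have := abs_sub_abs_le_abs_sub y x
              have habs : |y - x| = C := by rw [hC, abs_sub_comm]
              rw [habs] at this
              linarith [this]
            constructor <;> nlinarith
          · -- A > 3B, so C ≥ A - B ≥ (2/3) A
            have hCge : A - B ≤ C := by
              have := abs_sub_abs_le_abs_sub x y
              linarith [this]
            constructor <;> nlinarith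
        obtain ⟨hd1, hd2⟩ := hdom
        have hAqle : A ^ q ≤ 2 ^ q * C ^ q := by
          calc A ^ q ≤ (2 * C) ^ q := Real.rpow_le_rpow hA0 hd1 hq.le
            _ = 2 ^ q * C ^ q := Real.mul_rpow (by norm_num) hC0
        have hBqle : B ^ q ≤ 2 ^ q * C ^ q := by
          calc B ^ q ≤ (2 * C) ^ q := Real.rpow_le_rpow hB0 hd2 hq.le
            _ = 2 ^ q * C ^ q := Real.mul_rpow (by norm_num) hC0
        nlinarith [mul_nonneg hAp (by positivity : (0:ℝ) ≤ 2 * 2 ^ q + 3 ^ p + 3 ^ r),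
          mul_nonneg hBr (by positivity : (0:ℝ) ≤ 2 * 2 ^ q + 3 ^ p + 3 ^ r),
          mul_nonneg hCq h3p.le, mul_nonneg hCq h3r.le]
    have expand : (2 * 2 ^ q + 3 ^ p + 3 ^ r + 1) * (A ^ p + C ^ q + B ^ r)
        = (2 * 2 ^ q + 3 ^ p + 3 ^ r) * (A ^ p + C ^ q + B ^ r)
          + (A ^ p + C ^ q + B ^ r) := by ring
    linarith [key, hCq]
end
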